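/- Let K be an algebraically closed field of characteristic p > 0 and f ∈ K[[x]] with f(0) = 0, multiplicity m, finite Milnor number μ, and q := μ + 1 = min {n ∈ supp(f) : p ∤ n}. Define k := 1 if m = q, and otherwise k := max over n ∈ supp(f) with m ≤ n < q of ⌈(q − n)/(p^{e(n)} − 1)⌉, and d := q + (k − 1). Then f is right d-determined: any g ∈ K[[x]] with j^d g = j^d f is right equivalent to f. -/

import Mathlib

open PowerSeries

noncomputable def milnor (K : Type*) [Field K] (f : PowerSeries K) : ℕ :=
  Module.finrank K (PowerSeries K ⧸ Ideal.span {f.derivativeFun})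

def MilnorFinite (K : Type*) [Field K] (f : PowerSeries K) : Prop :=
  Module.Finite K (PowerSeries K ⧸ Ideal.span {f.derivativeFun})

def RightEquiv (K : Type*) [Field K] (f g : PowerSeries K) : Prop :=
  ∃ Φ : PowerSeries K ≃ₐ[K] PowerSeries K, Φ f = g

section Machinery

open Finset

variable {K : Type*} [Field K]

noncomputable def pcomp (f g : PowerSeries K) : PowerSeries K :=
  PowerSeries.mk fun D => ∑ n ∈ range (D + 1), coeff n f * coeff D (g ^ n)

lemma coeff_pow_eq_zero {g : PowerSeries K} (hg : constantCoeff g = 0)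
    {D n : ℕ} (h : D < n) : coeff D (g ^ n) = 0 := by
  have hX : (X : PowerSeries K) ∣ g := X_dvd_iff.mpr hg
  have : (X : PowerSeries K) ^ n ∣ g ^ n := pow_dvd_pow_of_dvd hX n
  exact X_pow_dvd_iff.mp this D h

lemma coeff_pcomp {f g : PowerSeries K} (D : ℕ) :
    coeff D (pcomp f g) = ∑ n ∈ range (D + 1), coeff n f * coeff D (g ^ n) := by
  simp [pcomp]

lemma coeff_pcomp' {f g : PowerSeries K} (hg : constantCoeff g = 0) {D M : ℕ} (hM : D < M) :
    coeff D (pcomp f g) = ∑ n ∈ range M, coeff n f * coeff D (g ^ n) := by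
  rw [coeff_pcomp]
  refine Finset.sum_subset ?_ ?_
  · intro x hx; simp only [mem_range] at *; omega
  · intro x hx hx'
    simp only [mem_range] at *
    rw [coeff_pow_eq_zero hg (by omega), mul_zero]

lemma coeff_pcomp_trunc {f g : PowerSeries K} (hg : constantCoeff g = 0) {D M : ℕ}
    (hM : D < M) :
    coeff D (pcomp f g) = coeff D (Polynomial.aeval g (trunc M f)) := by
  obtain ⟨M', rfl⟩ : ∃ M', M = M' + 1 := ⟨M - 1, by omega⟩
  rw [Polynomial.aeval_eq_sum_range' (natDegree_trunc_lt f M'), coeff_pcomp' hg hM, map_sum]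
  refine Finset.sum_congr rfl fun n hn => ?_
  rw [coeff_smul, PowerSeries.coeff_trunc, if_pos (mem_range.mp hn), smul_eq_mul]

-- aeval of a polynomial with vanishing low coefficients
lemma coeff_aeval_eq_zero {g : PowerSeries K} (hg : constantCoeff g = 0)
    {P : Polynomial K} {D : ℕ} (hP : ∀ i ≤ D, P.coeff i = 0) :
    coeff D (Polynomial.aeval g P) = 0 := by
  rw [Polynomial.aeval_eq_sum_range, map_sum]
  refine Finset.sum_eq_zero fun n hn => ?_
  rw [coeff_smul, smul_eq_mul]
  rcases le_or_gt n D with h | h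
  · rw [hP n h, zero_mul]
  · rw [coeff_pow_eq_zero hg h, mul_zero]

lemma coeff_mul_congr {a b a' b' : PowerSeries K} {D : ℕ}
    (ha : ∀ i ≤ D, coeff i a = coeff i a') (hb : ∀ i ≤ D, coeff i b = coeff i b') :
    coeff D (a * b) = coeff D (a' * b') := by
  rw [coeff_mul, coeff_mul]
  refine Finset.sum_congr rfl fun x hx => ?_
  rw [Finset.HasAntidiagonal.mem_antidiagonal] at hx
  rw [ha x.1 (by omega), hb x.2 (by omega)]

lemma coeff_pow_congr {a b : PowerSeries K} {D : ℕ}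
    (h : ∀ i ≤ D, coeff i a = coeff i b) (n : ℕ) :
    ∀ i ≤ D, coeff i (a ^ n) = coeff i (b ^ n) := by
  induction n with
  | zero => simp
  | succ n ih =>
    intro i hi
    rw [pow_succ, pow_succ]
    exact coeff_mul_congr (fun j hj => ih j (le_trans hj hi))
      (fun j hj => h j (le_trans hj hi))

lemma coeff_pcomp_congr_right {f a b : PowerSeries K} {D : ℕ}
    (h : ∀ i ≤ D, coeff i a = coeff i b) :
    coeff D (pcomp f a) = coeff D (pcomp f b) := by
  rw [coeff_pcomp, coeff_pcomp]
  exact Finset.sum_congr rfl fun n _ => by rw [coeff_pow_congr h n D le_rfl]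

lemma coeff_pcomp_congr_left {f f' g : PowerSeries K} {D : ℕ}
    (h : ∀ i ≤ D, coeff i f = coeff i f') :
    coeff D (pcomp f g) = coeff D (pcomp f' g) := by
  rw [coeff_pcomp, coeff_pcomp]
  exact Finset.sum_congr rfl fun n hn => by rw [h n (Nat.lt_succ_iff.mp (mem_range.mp hn))]

lemma pcomp_add (f₁ f₂ g : PowerSeries K) :
    pcomp (f₁ + f₂) g = pcomp f₁ g + pcomp f₂ g := by
  ext D
  rw [map_add, coeff_pcomp, coeff_pcomp, coeff_pcomp, ← Finset.sum_add_distrib]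
  exact Finset.sum_congr rfl fun n _ => by rw [map_add, add_mul]

lemma pcomp_one (g : PowerSeries K) : pcomp 1 g = 1 := by
  ext D
  rw [coeff_pcomp, Finset.sum_eq_single 0]
  · simp
  · intro n hn hne
    rw [coeff_one, if_neg hne, zero_mul]
  · intro h; simp at h

lemma pcomp_C (a : K) (g : PowerSeries K) : pcomp (C a) g = C a := by
  ext D
  rw [coeff_pcomp, Finset.sum_eq_single 0]
  · simp [coeff_C]
  · intro n hn hne
    rw [coeff_C, if_neg hne, zero_mul]
  · intro h; simp at h

lemma pcomp_X {g : PowerSeries K} (hg : constantCoeff g = 0) : pcomp X g = g := by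
  ext D
  rw [coeff_pcomp' hg (show D < D + 2 by omega), Finset.sum_eq_single 1]
  · simp
  · intro n hn hne
    rw [coeff_X, if_neg hne, zero_mul]
  · intro h
    exact absurd (mem_range.mpr (by omega)) h

lemma pcomp_mul {f₁ f₂ g : PowerSeries K} (hg : constantCoeff g = 0) :
    pcomp (f₁ * f₂) g = pcomp f₁ g * pcomp f₂ g := by
  ext D
  rw [coeff_pcomp_trunc hg (show D < D + 1 by omega)]
  have key : coeff D (Polynomial.aeval g (trunc (D+1) (f₁ * f₂)))
      = coeff D (Polynomial.aeval g (trunc (D+1) f₁ * trunc (D+1) f₂)) := by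
    have : coeff D (Polynomial.aeval g (trunc (D+1) (f₁*f₂) - trunc (D+1) f₁ * trunc (D+1) f₂)) = 0 := by
      refine coeff_aeval_eq_zero hg fun i hi => ?_
      rw [Polynomial.coeff_sub, PowerSeries.coeff_trunc, if_pos (by omega), Polynomial.coeff_mul,
        PowerSeries.coeff_mul, sub_eq_zero]
      refine Finset.sum_congr rfl fun x hx => ?_
      rw [Finset.HasAntidiagonal.mem_antidiagonal] at hx
      rw [PowerSeries.coeff_trunc, if_pos (by omega), PowerSeries.coeff_trunc, if_pos (by omega)]
    rw [map_sub, map_sub] at this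
    exact sub_eq_zero.mp this
  rw [key, map_mul]
  refine coeff_mul_congr (fun i hi => ?_) (fun i hi => ?_) <;>
    rw [← coeff_pcomp_trunc hg (show i < D + 1 by omega)]

noncomputable def pcompAlgHom (g : PowerSeries K) (hg : constantCoeff g = 0) :
    PowerSeries K →ₐ[K] PowerSeries K where
  toFun f := pcomp f g
  map_one' := pcomp_one g
  map_mul' f₁ f₂ := pcomp_mul hg
  map_zero' := by
    ext D; rw [coeff_pcomp]
    exact Finset.sum_eq_zero fun n _ => by simp
  map_add' f₁ f₂ := pcomp_add f₁ f₂ g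
  commutes' a := by
    show pcomp (algebraMap K (PowerSeries K) a) g = _
    rw [show (algebraMap K (PowerSeries K)) a = C a from rfl]
    exact pcomp_C a g

@[simp] lemma pcompAlgHom_apply (g : PowerSeries K) (hg : constantCoeff g = 0)
    (f : PowerSeries K) : pcompAlgHom g hg f = pcomp f g := rfl

lemma constantCoeff_pcomp {a b : PowerSeries K} (hb : constantCoeff b = 0) :
    constantCoeff (pcomp a b) = constantCoeff a := by
  rw [← coeff_zero_eq_constantCoeff_apply, coeff_pcomp, ← coeff_zero_eq_constantCoeff_apply]
  simp

lemma pcomp_assoc {f a b : PowerSeries K} (ha : constantCoeff a = 0)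
    (hb : constantCoeff b = 0) :
    pcomp (pcomp f a) b = pcomp f (pcomp a b) := by
  have hab : constantCoeff (pcomp a b) = 0 := by rw [constantCoeff_pcomp hb, ha]
  ext D
  have h1 : coeff D (pcomp (pcomp f a) b)
      = coeff D (pcomp (Polynomial.aeval a (trunc (D+1) f)) b) :=
    coeff_pcomp_congr_left fun i hi => coeff_pcomp_trunc ha (by omega)
  have h2 : pcomp (Polynomial.aeval a (trunc (D+1) f)) b
      = Polynomial.aeval (pcomp a b) (trunc (D+1) f) := by
    have := Polynomial.aeval_algHom_apply (pcompAlgHom b hb) a (trunc (D+1) f)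
    simpa using this.symm
  rw [h1, h2, ← coeff_pcomp_trunc hab (show D < D+1 by omega)]

lemma coeff_self_pow {g : PowerSeries K} (hg : constantCoeff g = 0) (n : ℕ) :
    coeff n (g ^ n) = (coeff 1 g) ^ n := by
  induction n with
  | zero => simp
  | succ n ih =>
    rw [pow_succ, coeff_mul, Finset.sum_eq_single (n, 1)]
    · rw [ih, pow_succ, mul_comm]
    · rintro ⟨u, v⟩ huv hne
      rw [Finset.HasAntidiagonal.mem_antidiagonal] at huv
      rcases lt_trichotomy u n with h | h | h
      · rw [coeff_pow_eq_zero hg h, zero_mul]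
      · subst h
        have hv : v = 1 := by omega
        subst hv
        exact absurd rfl hne
      · have : v = 0 := by omega
        subst this
        simp [← coeff_zero_eq_constantCoeff_apply, hg]
    · intro h
      exact absurd (Finset.HasAntidiagonal.mem_antidiagonal.mpr (by omega)) h

noncomputable def invCoeff (g h : PowerSeries K) : ℕ → K
  | D => (coeff D h - ∑ n ∈ (Finset.range D).attach,
      invCoeff g h n * coeff D (g ^ (n : ℕ))) / (coeff 1 g) ^ D
  decreasing_by exact Finset.mem_range.mp n.2

lemma pcomp_surjective {g : PowerSeries K} (hg : constantCoeff g = 0)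
    (h1 : coeff 1 g ≠ 0) : Function.Surjective fun f => pcomp f g := by
  intro h
  refine ⟨PowerSeries.mk (invCoeff g h), ?_⟩
  ext D
  rw [coeff_pcomp, Finset.sum_range_succ]
  have : ∑ n ∈ range D, coeff n (mk (invCoeff g h)) * coeff D (g ^ n)
      = ∑ n ∈ (Finset.range D).attach, invCoeff g h n * coeff D (g ^ (n:ℕ)) := by
    rw [← Finset.sum_attach]
    exact Finset.sum_congr rfl fun n _ => by rw [coeff_mk]
  rw [this, coeff_mk, invCoeff, coeff_self_pow hg, div_mul_cancel₀]
  · ring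
  · exact pow_ne_zero _ h1

open scoped Classical in
lemma pcomp_injective {g : PowerSeries K} (hg : constantCoeff g = 0)
    (h1 : coeff 1 g ≠ 0) : Function.Injective fun f => pcomp f g := by
  have key : ∀ f : PowerSeries K, pcomp f g = 0 → f = 0 := by
    intro f hf
    by_contra hne
    have hex : ∃ r, coeff r f ≠ 0 := by
      by_contra hh
      push_neg at hh
      exact hne (PowerSeries.ext fun n => by rw [hh n, map_zero])
    have hr : coeff (Nat.find hex) f ≠ 0 := Nat.find_spec hex
    set r := Nat.find hex with hrdef
    have hmin : ∀ i < r, coeff i f = 0 := fun i hi => by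
      by_contra hc
      exact absurd hi (not_lt.mpr (hrdef ▸ Nat.find_le hc))
    have hco : coeff r (pcomp f g) = coeff r f * (coeff 1 g) ^ r := by
      rw [coeff_pcomp, Finset.sum_eq_single r]
      · rw [coeff_self_pow hg]
      · intro n hn hne'
        rw [Finset.mem_range] at hn
        rw [hmin n (by omega), zero_mul]
      · intro h
        exact absurd (Finset.mem_range.mpr (by omega)) h
    rw [hf, map_zero] at hco
    exact hr (by
      have := hco.symm
      rcases mul_eq_zero.mp this with h | h
      · exact h
      · exact absurd h (pow_ne_zero _ h1))
  intro f₁ f₂ hf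
  simp only at hf
  have hadd := pcomp_add (f₁ - f₂) f₂ g
  rw [sub_add_cancel, hf] at hadd
  have h0 : pcomp (f₁ - f₂) g = 0 := right_eq_add.mp hadd
  exact sub_eq_zero.mp (key _ h0)

noncomputable def pcompEquiv (g : PowerSeries K) (hg : constantCoeff g = 0)
    (h1 : coeff 1 g ≠ 0) : PowerSeries K ≃ₐ[K] PowerSeries K :=
  AlgEquiv.ofBijective (pcompAlgHom g hg) ⟨pcomp_injective hg h1, pcomp_surjective hg h1⟩

@[simp] lemma pcompEquiv_apply (g : PowerSeries K) (hg : constantCoeff g = 0)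
    (h1 : coeff 1 g ≠ 0) (f : PowerSeries K) : pcompEquiv g hg h1 f = pcomp f g := rfl

lemma pcomp_X_right (f : PowerSeries K) : pcomp f X = f := by
  ext D
  rw [coeff_pcomp, Finset.sum_eq_single D]
  · rw [← pow_one (X : PowerSeries K), ← pow_mul, coeff_X_pow, if_pos (by omega), mul_one]
  · intro n hn hne
    rw [Finset.mem_range] at hn
    rw [← pow_one (X : PowerSeries K), ← pow_mul, coeff_X_pow, if_neg (by omega), mul_zero]
  · intro h
    exact absurd (Finset.mem_range.mpr (by omega)) h

lemma lucas_aux {p : ℕ} (hp : p.Prime) {n J e : ℕ} (hJ1 : 1 ≤ J) (hJn : J ≤ n)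
    (he : p ^ e ∣ n) (hnd : ¬ p ∣ n.choose J) : p ^ e ∣ J := by
  have hid : n * (n - 1).choose (J - 1) = n.choose J * J := by
    have h := Nat.add_one_mul_choose_eq (n - 1) (J - 1)
    have e1 : n - 1 + 1 = n := Nat.succ_pred_eq_of_pos (show 0 < n by omega)
    have e2 : J - 1 + 1 = J := Nat.succ_pred_eq_of_pos (show 0 < J by omega)
    rwa [e1, e2] at h
  have h1 : p ^ e ∣ n.choose J * J := hid ▸ Dvd.dvd.mul_right he _
  have cop : Nat.Coprime (p ^ e) (n.choose J) :=
    Nat.Coprime.pow_left e ((Nat.Prime.coprime_iff_not_dvd hp).mpr hnd)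
  exact cop.dvd_of_dvd_mul_left h1

lemma coeff_phi_pow (c : K) (t n D : ℕ) :
    coeff D ((X + C c * X ^ t) ^ n)
      = ∑ a ∈ range (n + 1), if a + t * (n - a) = D then c ^ (n - a) * (n.choose a : K) else 0 := by
  rw [add_pow, map_sum]
  refine Finset.sum_congr rfl fun a ha => ?_
  have h2 : ((n.choose a : ℕ) : PowerSeries K) = C ((n.choose a : K)) := by
    rw [← map_natCast C]
  have key : (X : PowerSeries K) ^ a * (C c * X ^ t) ^ (n - a) * ((n.choose a : ℕ) : PowerSeries K)
      = C (c ^ (n - a) * (n.choose a : K)) * X ^ (a + t * (n - a)) := by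
    rw [mul_pow, ← map_pow, ← pow_mul, h2, map_mul]
    ring
  rw [key, coeff_C_mul, coeff_X_pow]
  by_cases h : a + t * (n - a) = D
  · rw [if_pos h, if_pos h.symm, mul_one]
  · rw [if_neg h, if_neg (fun hh => h hh.symm), mul_zero]

lemma AR {p : ℕ} (hp : p.Prime) [CharP K p] {F : PowerSeries K} {q k t : ℕ}
    (hlow : ∀ i, coeff i F ≠ 0 → i < q →
      p ∣ i ∧ 1 ≤ i ∧ q - i ≤ (p ^ padicValNat p i - 1) * k)
    (ht : k ≤ t - 1) (ht2 : 2 ≤ t)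
    {n J : ℕ} (hn : coeff n F ≠ 0) (hJ1 : 1 ≤ J) (hJn : J ≤ n)
    (hb : ((n.choose J : ℕ) : K) ≠ 0) :
    q + (t - 1) ≤ n + (t - 1) * J := by
  rcases le_or_gt q n with h | h
  · have := Nat.mul_le_mul_left (t - 1) hJ1
    omega
  · obtain ⟨hdvd, hi1, hkey⟩ := hlow n hn h
    haveI : Fact p.Prime := ⟨hp⟩
    set e := padicValNat p n with he
    have he1 : 1 ≤ e := one_le_padicValNat_of_dvd (by omega) hdvd
    have hpe : p ^ e ∣ n := pow_padicValNat_dvd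
    have hnd : ¬ p ∣ n.choose J := fun hd => hb (by
      rwa [CharP.cast_eq_zero_iff K p])
    have hJge : p ^ e ≤ J := Nat.le_of_dvd (by omega) (lucas_aux hp hJ1 hJn hpe hnd)
    have hP2 : 2 ≤ p ^ e := by
      calc 2 ≤ p := hp.two_le
      _ = p ^ 1 := (pow_one p).symm
      _ ≤ p ^ e := Nat.pow_le_pow_right hp.one_lt.le he1
    have h1 : (p ^ e - 1) * k ≤ (p ^ e - 1) * (t - 1) := Nat.mul_le_mul_left _ ht
    have h2 : (t - 1) * p ^ e = (t - 1) * (p ^ e - 1) + (t - 1) := by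
      have hsub : p ^ e - 1 + 1 = p ^ e := by omega
      calc (t - 1) * p ^ e = (t - 1) * ((p ^ e - 1) + 1) := by rw [hsub]
      _ = (t - 1) * (p ^ e - 1) + (t - 1) := by ring
    have h3 : (t - 1) * p ^ e ≤ (t - 1) * J := Nat.mul_le_mul_left _ hJge
    have h4 : (p ^ e - 1) * (t - 1) = (t - 1) * (p ^ e - 1) := Nat.mul_comm _ _
    omega

lemma step_vanish {p : ℕ} (hp : p.Prime) [CharP K p] {F : PowerSeries K} {q k t : ℕ}
    (hlow : ∀ i, coeff i F ≠ 0 → i < q →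
      p ∣ i ∧ 1 ≤ i ∧ q - i ≤ (p ^ padicValNat p i - 1) * k)
    (ht : k ≤ t - 1) (ht2 : 2 ≤ t) (c : K) :
    ∀ i < q + (t - 1), coeff i (pcomp F (X + C c * X ^ t)) = coeff i F := by
  intro i hi
  have hφ : constantCoeff (X + C c * X ^ t) = 0 := by
    rw [map_add, map_mul, constantCoeff_X, map_pow, constantCoeff_X,
      zero_pow (by omega : t ≠ 0), mul_zero, add_zero]
  rw [coeff_pcomp, Finset.sum_eq_single i]
  · rw [coeff_phi_pow, Finset.sum_eq_single i]
    · rw [Nat.sub_self, if_pos (by omega), pow_zero, Nat.choose_self]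
      simp
    · intro a ha hne
      rw [Finset.mem_range] at ha
      have h2 : 2 * (i - a) ≤ t * (i - a) := Nat.mul_le_mul_right _ ht2
      rw [if_neg (by omega)]
    · intro h
      exact absurd (Finset.mem_range.mpr (by omega)) h
  · intro n hn hne
    rw [Finset.mem_range] at hn
    by_cases hbn : coeff n F = 0
    · rw [hbn, zero_mul]
    · rw [coeff_phi_pow]
      rw [Finset.sum_eq_zero, mul_zero]
      intro a ha
      rw [Finset.mem_range] at ha
      by_cases hcond : a + t * (n - a) = i
      swap
      · rw [if_neg hcond]
      · rw [if_pos hcond]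
        have haln : a < n := by
          by_contra hh
          have : a = n := by omega
          subst this
          simp at hcond
          omega
        set J := n - a with hJ
        have hJ1 : 1 ≤ J := by omega
        have hJn : J ≤ n := by omega
        by_cases hch : ((n.choose a : ℕ) : K) = 0
        · rw [hch, mul_zero]
        · exfalso
          have hsym : n.choose J = n.choose a := by
            rw [hJ]
            exact Nat.choose_symm (by omega)
          have hch' : ((n.choose J : ℕ) : K) ≠ 0 := by rw [hsym]; exact hch
          have := AR hp hlow ht ht2 hbn hJ1 hJn hch'
          have h5 : (t - 1) * J + J = t * J := by
            have h6 : t - 1 + 1 = t := by omega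
            calc (t - 1) * J + J = ((t - 1) + 1) * J := by ring
            _ = t * J := by rw [h6]
          omega
  · intro h
    exact absurd (Finset.mem_range.mpr (by omega)) h

lemma step_solve {p : ℕ} (hp : p.Prime) [CharP K p] [IsAlgClosed K] {F : PowerSeries K}
    {q t : ℕ}
    (hq1 : 1 ≤ q) (hqF : coeff q F ≠ 0) (hqp : ¬ p ∣ q) (ht1 : 1 ≤ t) :
    ∀ v : K, ∃ c : K, coeff (q + (t - 1)) (pcomp F (X + C c * X ^ t)) = v := by
  intro v
  set D := q + (t - 1) with hD
  set P : Polynomial K := ∑ n ∈ range (D + 1), ∑ a ∈ range (n + 1),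
    if a + t * (n - a) = D then
      Polynomial.C (coeff n F * (n.choose a : K)) * Polynomial.X ^ (n - a) else 0 with hP
  have heval : ∀ c : K, P.eval c = coeff D (pcomp F (X + C c * X ^ t)) := by
    intro c
    rw [hP, coeff_pcomp, Polynomial.eval_finset_sum]
    refine Finset.sum_congr rfl fun n hn => ?_
    rw [coeff_phi_pow, Polynomial.eval_finset_sum, Finset.mul_sum]
    refine Finset.sum_congr rfl fun a ha => ?_
    by_cases hcond : a + t * (n - a) = D
    · rw [if_pos hcond, if_pos hcond, Polynomial.eval_mul, Polynomial.eval_C,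
        Polynomial.eval_pow, Polynomial.eval_X]
      ring
    · rw [if_neg hcond, if_neg hcond, Polynomial.eval_zero, mul_zero]
  have hcoeff1 : P.coeff 1 = coeff q F * (q : K) := by
    rw [hP, Polynomial.finset_sum_coeff, Finset.sum_eq_single q]
    · rw [Polynomial.finset_sum_coeff, Finset.sum_eq_single (q - 1)]
      · have hcnd : q - 1 + t * (q - (q - 1)) = D := by
          rw [show q - (q - 1) = 1 by omega, mul_one]; omega
        rw [if_pos hcnd, Polynomial.coeff_C_mul, Polynomial.coeff_X_pow,
          if_pos (by omega), mul_one]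
        have : q.choose (q - 1) = q := by
          have h1 : q - (q - 1) = 1 := by omega
          have := Nat.choose_symm (show q - 1 ≤ q by omega)
          rw [h1, Nat.choose_one_right] at this
          omega
        rw [this]
      · intro a ha hne
        rw [Finset.mem_range] at ha
        by_cases hcond : a + t * (q - a) = D
        · rw [if_pos hcond, Polynomial.coeff_C_mul, Polynomial.coeff_X_pow,
            if_neg (by omega), mul_zero]
        · rw [if_neg hcond, Polynomial.coeff_zero]
      · intro h
        exact absurd (Finset.mem_range.mpr (by omega)) h
    · intro n hn hne
      rw [Finset.mem_range] at hn
      rw [Polynomial.finset_sum_coeff, Finset.sum_eq_zero]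
      intro a ha
      rw [Finset.mem_range] at ha
      by_cases hcond : a + t * (n - a) = D
      · rw [if_pos hcond, Polynomial.coeff_C_mul, Polynomial.coeff_X_pow]
        rw [if_neg ?hna, mul_zero]
        case hna =>
          intro h1na
          -- n - a = 1, so a = n - 1, and cond gives n - 1 + t = D = q + t - 1, so n = q
          have : a + 1 = n := by omega
          have ht' : t * (n - a) = t := by rw [show n - a = 1 by omega, mul_one]
          omega
      · rw [if_neg hcond, Polynomial.coeff_zero]
    · intro h
      exact absurd (Finset.mem_range.mpr (by omega)) h
  have hne1 : P.coeff 1 ≠ 0 := by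
    rw [hcoeff1]
    refine mul_ne_zero hqF ?_
    rw [Ne, CharP.cast_eq_zero_iff K p]
    exact hqp
  set Q := P - Polynomial.C v with hQ
  have hQc1 : Q.coeff 1 ≠ 0 := by
    rw [hQ, Polynomial.coeff_sub, Polynomial.coeff_C, if_neg (by omega), sub_zero]
    exact hne1
  have hQne : Q ≠ 0 := fun h => hQc1 (by rw [h, Polynomial.coeff_zero])
  have hdeg : Q.degree ≠ 0 := by
    intro h
    have h1 : 1 ≤ Q.natDegree := Polynomial.le_natDegree_of_ne_zero hQc1
    rw [Polynomial.degree_eq_natDegree hQne] at h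
    have : Q.natDegree = 0 := by exact_mod_cast h
    omega
  obtain ⟨c, hc⟩ := IsAlgClosed.exists_root Q hdeg
  refine ⟨c, ?_⟩
  have : P.eval c - v = 0 := by
    have := hc
    rw [Polynomial.IsRoot, hQ, Polynomial.eval_sub, Polynomial.eval_C] at this
    exact this
  rw [← heval c]
  exact sub_eq_zero.mp this

lemma constantCoeff_phi (c : K) {t : ℕ} (ht : 1 ≤ t) :
    constantCoeff (X + C c * X ^ t) = 0 := by
  rw [map_add, map_mul, constantCoeff_X, map_pow, constantCoeff_X,
    zero_pow (by omega : t ≠ 0), mul_zero, add_zero]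

lemma coeff_one_phi (c : K) {t : ℕ} (ht : 2 ≤ t) :
    coeff 1 (X + C c * X ^ t) = 1 := by
  rw [map_add, coeff_X, if_pos rfl, coeff_C_mul, coeff_X_pow, if_neg (by omega), mul_zero,
    add_zero]

lemma coeff_one_pcomp {a b : PowerSeries K} :
    coeff 1 (pcomp a b) = coeff 1 a * coeff 1 b := by
  rw [coeff_pcomp]
  rw [show (1:ℕ) + 1 = 2 from rfl, Finset.sum_range_succ, Finset.sum_range_succ,
    Finset.sum_range_zero, pow_zero, pow_one]
  simp [coeff_one]

open scoped Classical in
noncomputable def pickc (g F : PowerSeries K) (q t : ℕ) : K :=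
  if h : ∃ c : K, coeff (q + (t - 1)) (pcomp F (X + C c * X ^ t))
      = coeff (q + (t - 1)) g
  then h.choose else 0

noncomputable def seqF (f g : PowerSeries K) (q k : ℕ) : ℕ → PowerSeries K
  | 0 => f
  | N + 1 => pcomp (seqF f g q k N)
      (X + C (pickc g (seqF f g q k N) q (k + 1 + N)) * X ^ (k + 1 + N))

noncomputable def seqPsi (f g : PowerSeries K) (q k : ℕ) : ℕ → PowerSeries K
  | 0 => X
  | N + 1 => pcomp (seqPsi f g q k N)
      (X + C (pickc g (seqF f g q k N) q (k + 1 + N)) * X ^ (k + 1 + N))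

lemma constantCoeff_seqPsi (f g : PowerSeries K) (q k : ℕ) (N : ℕ) :
    constantCoeff (seqPsi f g q k N) = 0 := by
  induction N with
  | zero => exact constantCoeff_X
  | succ N ih =>
    rw [seqPsi, constantCoeff_pcomp (constantCoeff_phi _ (by omega)), ih]

lemma coeff_one_seqPsi (f g : PowerSeries K) (q k : ℕ) (hk : 1 ≤ k) (N : ℕ) :
    coeff 1 (seqPsi f g q k N) = 1 := by
  induction N with
  | zero => rw [seqPsi, coeff_X, if_pos rfl]
  | succ N ih =>
    rw [seqPsi, coeff_one_pcomp, ih, one_mul,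
      coeff_one_phi _ (show 2 ≤ k + 1 + N by omega)]

lemma seqF_eq_pcomp (f g : PowerSeries K) (q k : ℕ) (N : ℕ) :
    seqF f g q k N = pcomp f (seqPsi f g q k N) := by
  induction N with
  | zero => rw [seqF, seqPsi, pcomp_X_right]
  | succ N ih =>
    rw [seqF, seqPsi, ih,
      pcomp_assoc (constantCoeff_seqPsi f g q k N) (constantCoeff_phi _ (by omega))]

lemma seqPsi_stable (f g : PowerSeries K) (q k : ℕ) {i N M : ℕ} (hN : i ≤ N) (hM : N ≤ M) :
    coeff i (seqPsi f g q k M) = coeff i (seqPsi f g q k N) := by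
  induction M with
  | zero =>
    have : N = 0 := by omega
    rw [this]
  | succ M ih =>
    rcases Nat.lt_or_ge N (M + 1) with h | h
    · have hiM : i ≤ M := by omega
      rw [seqPsi, ← ih (by omega)]
      have : coeff i (pcomp (seqPsi f g q k M)
          (X + C (pickc g (seqF f g q k M) q (k + 1 + M)) * X ^ (k + 1 + M)))
          = coeff i (pcomp (seqPsi f g q k M) X) := by
        refine coeff_pcomp_congr_right fun j hj => ?_
        rw [map_add, coeff_C_mul, coeff_X_pow, if_neg (by omega), mul_zero, add_zero]
      rw [this, pcomp_X_right]
    · have : N = M + 1 := by omega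
      rw [this]

lemma ceil_bound {A B k : ℕ} (hB : 1 ≤ B) (h : (A + B - 1) / B ≤ k) : A ≤ B * k := by
  have h1 := Nat.div_add_mod (A + B - 1) B
  have h2 : (A + B - 1) % B < B := Nat.mod_lt _ (by omega)
  have h3 : B * ((A + B - 1) / B) ≤ B * k := Nat.mul_le_mul_left _ h
  omega

end Machinery

open scoped Classical in
theorem stmt_10 (K : Type*) [Field K] [IsAlgClosed K] (p : ℕ) (hp : p.Prime) [CharP K p]
    (f : PowerSeries K) (hf0 : constantCoeff f = 0) (hfin : MilnorFinite K f)
    (m q k d : ℕ)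
    (hm : coeff m f ≠ 0) (hmin : ∀ i < m, coeff i f = 0)
    (hq : q = milnor K f + 1)
    (hq' : q = sInf {n | coeff n f ≠ 0 ∧ ¬ p ∣ n})
    (hqne : {n | coeff n f ≠ 0 ∧ ¬ p ∣ n}.Nonempty)
    (hk : k = if m = q then 1 else
      ((Finset.Icc m (q - 1)).filter fun n => coeff n f ≠ 0).sup
        fun n => (q - n + (p ^ padicValNat p n - 1) - 1) / (p ^ padicValNat p n - 1))
    (hd : d = q + (k - 1)) :
    ∀ g : PowerSeries K, (∀ i ≤ d, coeff i g = coeff i f) → RightEquiv K f g := by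
  intro g hgd
  haveI : Fact p.Prime := ⟨hp⟩
  have hq_mem := Nat.sInf_mem hqne
  rw [← hq'] at hq_mem
  obtain ⟨hqf, hqp⟩ := hq_mem
  have hm1 : 1 ≤ m := by
    by_contra h
    have hm0 : m = 0 := by omega
    rw [hm0, coeff_zero_eq_constantCoeff_apply, hf0] at hm
    exact hm rfl
  have hmq : m ≤ q := by
    by_contra h
    exact hqf (hmin q (by omega))
  have hpd_small : ∀ i, coeff i f ≠ 0 → i < q → p ∣ i := by
    intro i hif hiq
    have hni : i ∉ {n | coeff n f ≠ 0 ∧ ¬ p ∣ n} := Nat.notMem_of_lt_sInf (hq' ▸ hiq)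
    by_contra hnd
    exact hni ⟨hif, hnd⟩
  have hk1 : 1 ≤ k := by
    by_cases hmq' : m = q
    · rw [hk, if_pos hmq']
    · have hmltq : m < q := by omega
      have hpdm : p ∣ m := hpd_small m hm hmltq
      have hE1 : 1 ≤ padicValNat p m := one_le_padicValNat_of_dvd (by omega) hpdm
      have hPE : 2 ≤ p ^ padicValNat p m := by
        calc 2 ≤ p := hp.two_le
        _ = p ^ 1 := (pow_one p).symm
        _ ≤ p ^ padicValNat p m := Nat.pow_le_pow_right hp.one_lt.le hE1
      have h1 : 1 ≤ (q - m + (p ^ padicValNat p m - 1) - 1) / (p ^ padicValNat p m - 1) :=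
        (Nat.one_le_div_iff (by omega)).mpr (by omega)
      have hmem : m ∈ (Finset.Icc m (q - 1)).filter (fun n => coeff n f ≠ 0) := by
        rw [Finset.mem_filter, Finset.mem_Icc]
        exact ⟨⟨le_rfl, by omega⟩, hm⟩
      rw [hk, if_neg hmq']
      exact le_trans h1 (Finset.le_sup (f := fun n => (q - n + (p ^ padicValNat p n - 1) - 1) / (p ^ padicValNat p n - 1)) hmem)
  have hdq : q ≤ d := by omega
  have hq1 : 1 ≤ q := by omega
  have hlow_f : ∀ i, coeff i f ≠ 0 → i < q →
      p ∣ i ∧ 1 ≤ i ∧ q - i ≤ (p ^ padicValNat p i - 1) * k := by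
    intro i hif hiq
    have him : m ≤ i := by
      by_contra h
      exact hif (hmin i (by omega))
    have hpd : p ∣ i := hpd_small i hif hiq
    have hmneq : m ≠ q := by omega
    have hE1 : 1 ≤ padicValNat p i := one_le_padicValNat_of_dvd (by omega) hpd
    have hPE : 2 ≤ p ^ padicValNat p i := by
      calc 2 ≤ p := hp.two_le
      _ = p ^ 1 := (pow_one p).symm
      _ ≤ p ^ padicValNat p i := Nat.pow_le_pow_right hp.one_lt.le hE1
    have hk_ge : (q - i + (p ^ padicValNat p i - 1) - 1) / (p ^ padicValNat p i - 1) ≤ k := by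
      have hmem : i ∈ (Finset.Icc m (q - 1)).filter (fun n => coeff n f ≠ 0) := by
        rw [Finset.mem_filter, Finset.mem_Icc]
        exact ⟨⟨him, by omega⟩, hif⟩
      rw [hk, if_neg hmneq]
      exact Finset.le_sup (f := fun n => (q - n + (p ^ padicValNat p n - 1) - 1) / (p ^ padicValNat p n - 1)) hmem
    exact ⟨hpd, by omega, ceil_bound (by omega) hk_ge⟩
  have hlow_F : ∀ F : PowerSeries K, (∀ i ≤ d, coeff i F = coeff i f) →
      ∀ i, coeff i F ≠ 0 → i < q →
      p ∣ i ∧ 1 ≤ i ∧ q - i ≤ (p ^ padicValNat p i - 1) * k := by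
    intro F hF i hiF hiq
    rw [hF i (by omega)] at hiF
    exact hlow_f i hiF hiq
  -- the inductive invariant
  have inv : ∀ N, (∀ i ≤ d, coeff i (seqF f g q k N) = coeff i f) ∧
      (∀ i ≤ d + N, coeff i (seqF f g q k N) = coeff i g) := by
    intro N
    induction N with
    | zero =>
      constructor
      · intro i hi; rw [seqF]
      · intro i hi; rw [seqF]; exact (hgd i (by omega)).symm
    | succ N ih =>
      obtain ⟨ih1, ih2⟩ := ih
      have hqt : q + (k + 1 + N - 1) = d + 1 + N := by omega
      have hvan := step_vanish hp (hlow_F _ ih1) (show k ≤ k + 1 + N - 1 by omega)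
        (show 2 ≤ k + 1 + N by omega) (pickc g (seqF f g q k N) q (k + 1 + N))
      have hsolve := step_solve hp hq1 (show coeff q (seqF f g q k N) ≠ 0 by
          rw [ih1 q hdq]; exact hqf) hqp (show 1 ≤ k + 1 + N by omega)
        (coeff (q + (k + 1 + N - 1)) g)
      have hpick : coeff (q + (k + 1 + N - 1)) (seqF f g q k (N + 1))
          = coeff (q + (k + 1 + N - 1)) g := by
        rw [seqF, pickc, dif_pos hsolve]
        exact hsolve.choose_spec
      constructor
      · intro i hi
        rw [seqF, hvan i (by omega), ih1 i hi]
      · intro i hi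
        rcases Nat.lt_or_ge i (d + 1 + N) with h | h
        · rw [seqF, hvan i (by omega), ih2 i (by omega)]
        · have hieq : i = d + 1 + N := by omega
          rw [hieq, ← hqt]
          exact hpick
  -- the limit substitution
  set ψ : PowerSeries K := PowerSeries.mk fun i => coeff i (seqPsi f g q k i) with hψ
  have hstab : ∀ j M, j ≤ M → coeff j ψ = coeff j (seqPsi f g q k M) := by
    intro j M hj
    rw [hψ, coeff_mk]
    exact (seqPsi_stable f g q k le_rfl hj).symm
  have hψ0 : constantCoeff ψ = 0 := by
    rw [← coeff_zero_eq_constantCoeff_apply, hstab 0 0 le_rfl,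
      coeff_zero_eq_constantCoeff_apply, constantCoeff_seqPsi]
  have hψ1 : coeff 1 ψ ≠ 0 := by
    rw [hstab 1 1 le_rfl, coeff_one_seqPsi f g q k hk1]
    exact one_ne_zero
  have hfinal : pcomp f ψ = g := by
    ext D
    calc coeff D (pcomp f ψ) = coeff D (pcomp f (seqPsi f g q k D)) :=
        coeff_pcomp_congr_right fun j hj => hstab j D hj
    _ = coeff D (seqF f g q k D) := by rw [seqF_eq_pcomp]
    _ = coeff D g := (inv D).2 D (by omega)
  exact ⟨pcompEquiv ψ hψ0 hψ1, by rw [pcompEquiv_apply]; exact hfinal⟩
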